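/- The Hessian in β of the MDPDE loss ρ(y, Xβ, η) = L₁|V|^{-α/2} - L₂|V|^{-α/2}exp{-(α/2)(y-Xβ)^T V^{-1}(y-Xβ)} equals (α+1)·c(y,β)·[X^T V^{-1} X - α X^T d d^T X], where d = V^{-1}(y - Xβ) and c(y,β) > 0; hence ρ is convex in β on any region where v^T X^T V^{-1} X v ≥ α (d^T X v)² for all v ∈ ℝᵖ. -/

import Mathlib

open Matrix Real

lemma quad_expand {m : ℕ} (M : Matrix (Fin m) (Fin m) ℝ) (hM : Mᵀ = M)
    (r w : Fin m → ℝ) (t : ℝ) :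
    (r - t • w) ⬝ᵥ M *ᵥ (r - t • w)
      = r ⬝ᵥ M *ᵥ r - 2 * t * ((M *ᵥ r) ⬝ᵥ w) + t ^ 2 * (w ⬝ᵥ M *ᵥ w) := by
  have h1 : w ⬝ᵥ M *ᵥ r = (M *ᵥ r) ⬝ᵥ w := dotProduct_comm _ _
  have h2 : r ⬝ᵥ M *ᵥ w = (M *ᵥ r) ⬝ᵥ w := by
    rw [dotProduct_mulVec, ← mulVec_transpose, hM]
  simp only [mulVec_sub, mulVec_smul, dotProduct_sub, sub_dotProduct,
    dotProduct_smul, smul_dotProduct, smul_eq_mul]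
  rw [h1, h2]; ring

lemma expquad_deriv {K₁ K₂ A B C : ℝ} (t₀ : ℝ) :
    HasDerivAt (fun t => K₁ - K₂ * Real.exp (A + B * t + C * t ^ 2))
      (-(K₂ * ((B + 2 * C * t₀) * Real.exp (A + B * t₀ + C * t₀ ^ 2)))) t₀ := by
  have hg : HasDerivAt (fun t : ℝ => A + B * t + C * t ^ 2) (B + 2 * C * t₀) t₀ := by
    have := (((hasDerivAt_id t₀).const_mul B).const_add A).add
      (((hasDerivAt_pow 2 t₀)).const_mul C)
    simpa [Pi.add_def, mul_comm, mul_assoc, mul_left_comm] using this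
  have := ((hg.exp).const_mul K₂).const_sub K₁
  simpa [mul_comm, mul_assoc, mul_left_comm] using this

lemma expquad_deriv2 (K₁ K₂ A B C : ℝ) (t₀ : ℝ) :
    iteratedDeriv 2 (fun t => K₁ - K₂ * Real.exp (A + B * t + C * t ^ 2)) t₀
      = -(K₂ * Real.exp (A + B * t₀ + C * t₀ ^ 2)
          * (2 * C + (B + 2 * C * t₀) ^ 2)) := by
  have hd1 : deriv (fun t => K₁ - K₂ * Real.exp (A + B * t + C * t ^ 2))
      = fun t => -(K₂ * ((B + 2 * C * t) * Real.exp (A + B * t + C * t ^ 2))) := by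
    funext t; exact (expquad_deriv t).deriv
  rw [show (2 : ℕ) = 1 + 1 from rfl, iteratedDeriv_succ, iteratedDeriv_one, hd1]
  have hg : HasDerivAt (fun t : ℝ => A + B * t + C * t ^ 2) (B + 2 * C * t₀) t₀ := by
    have := (((hasDerivAt_id t₀).const_mul B).const_add A).add
      (((hasDerivAt_pow 2 t₀)).const_mul C)
    simpa [Pi.add_def, mul_comm, mul_assoc, mul_left_comm] using this
  have hB : HasDerivAt (fun t : ℝ => B + 2 * C * t) (2 * C) t₀ := by
    simpa using ((hasDerivAt_id t₀).const_mul (2 * C)).const_add B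
  have := ((hB.mul hg.exp).const_mul K₂).neg
  rw [show deriv (fun t => -(K₂ * ((B + 2 * C * t) * Real.exp (A + B * t + C * t ^ 2)))) t₀ = _ from this.deriv]; ring

/-- The Hessian in `β` of the MDPDE loss
`ρ(β) = L₁|V|^{-α/2} - L₂|V|^{-α/2} exp(-(α/2)(y-Xβ)ᵀV⁻¹(y-Xβ))` equals
`(α+1) c(y,β) [Xᵀ V⁻¹ X - α Xᵀ d dᵀ X]` with `d = V⁻¹(y - Xβ)` and
`c(y,β) > 0` (the Hessian is expressed through second directional derivatives:
for every direction `v`, `(d²/dt²) ρ(β + t v) |_{t=0}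
  = (α+1) c(y,β) (vᵀ Xᵀ V⁻¹ X v - α (dᵀ X v)²)`); hence `ρ` is convex in `β`
on any convex region `𝓑` where `vᵀ Xᵀ V⁻¹ X v ≥ α (dᵀ X v)²` for all `v`. -/
theorem stmt16 {m p : ℕ} (X : Matrix (Fin m) (Fin p) ℝ) (y : Fin m → ℝ)
    (V : Matrix (Fin m) (Fin m) ℝ) (hV : V.PosDef) (α L₁ L₂ : ℝ)
    (hα : 0 < α) (hL₂ : 0 < L₂)
    (ρ : (Fin p → ℝ) → ℝ)
    (hρ : ∀ β, ρ β = L₁ * V.det ^ (-(α / 2)) - L₂ * V.det ^ (-(α / 2)) *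
      Real.exp (-(α / 2) * ((y - X *ᵥ β) ⬝ᵥ V⁻¹ *ᵥ (y - X *ᵥ β))))
    (d : (Fin p → ℝ) → (Fin m → ℝ))
    (hd : ∀ β, d β = V⁻¹ *ᵥ (y - X *ᵥ β))
    (c : (Fin p → ℝ) → ℝ)
    (hc : ∀ β, c β = (α / (α + 1)) * L₂ * V.det ^ (-(α / 2)) *
      Real.exp (-(α / 2) * ((y - X *ᵥ β) ⬝ᵥ V⁻¹ *ᵥ (y - X *ᵥ β)))) :
    (∀ β v : Fin p → ℝ,
        iteratedDeriv 2 (fun t : ℝ => ρ (β + t • v)) 0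
          = (α + 1) * c β *
            (v ⬝ᵥ (Xᵀ * V⁻¹ * X) *ᵥ v - α * (d β ⬝ᵥ (X *ᵥ v)) ^ 2))
      ∧ (∀ β, 0 < c β)
      ∧ ∀ 𝓑 : Set (Fin p → ℝ), Convex ℝ 𝓑 →
          (∀ β ∈ 𝓑, ∀ v : Fin p → ℝ,
            α * (d β ⬝ᵥ (X *ᵥ v)) ^ 2 ≤ v ⬝ᵥ (Xᵀ * V⁻¹ * X) *ᵥ v) →
          ConvexOn ℝ 𝓑 ρ := by
  have hVs : V⁻¹ᵀ = V⁻¹ := by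
    have := hV.1.inv
    rwa [Matrix.IsHermitian, conjTranspose_eq_transpose_of_trivial] at this
  set K₂ : ℝ := L₂ * V.det ^ (-(α / 2)) with hK₂def
  have hK₂ : 0 < K₂ := mul_pos hL₂ (Real.rpow_pos_of_pos hV.det_pos _)
  -- quadratic form abbreviations
  have hquadpos : ∀ w : Fin m → ℝ, 0 ≤ w ⬝ᵥ V⁻¹ *ᵥ w := fun w =>
    (hV.inv).posSemidef.dotProduct_mulVec_nonneg w
  -- main expansion: ρ along a line
  have hline : ∀ β v : Fin p → ℝ,
      (fun t : ℝ => ρ (β + t • v))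
        = fun t : ℝ => L₁ * V.det ^ (-(α / 2)) - K₂ *
          Real.exp ((-(α / 2) * ((y - X *ᵥ β) ⬝ᵥ V⁻¹ *ᵥ (y - X *ᵥ β)))
            + (α * (d β ⬝ᵥ (X *ᵥ v))) * t
            + (-(α / 2) * ((X *ᵥ v) ⬝ᵥ V⁻¹ *ᵥ (X *ᵥ v))) * t ^ 2) := by
    intro β v
    funext t
    rw [hρ, hd]
    have hsub : y - X *ᵥ (β + t • v) = (y - X *ᵥ β) - t • (X *ᵥ v) := by
      rw [mulVec_add, mulVec_smul]; abel
    rw [hsub, quad_expand V⁻¹ hVs]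
    ring_nf
  -- identify the quadratic-form coefficient
  have hCform : ∀ v : Fin p → ℝ,
      v ⬝ᵥ (Xᵀ * V⁻¹ * X) *ᵥ v = (X *ᵥ v) ⬝ᵥ V⁻¹ *ᵥ (X *ᵥ v) := by
    intro v
    rw [← mulVec_mulVec, ← mulVec_mulVec, dotProduct_mulVec, ← mulVec_transpose,
      transpose_transpose]
  have hcpos : ∀ β, 0 < c β := by
    intro β
    rw [hc]
    have h1 : 0 < α / (α + 1) := div_pos hα (by linarith)
    have hdet : 0 < V.det := hV.det_pos
    positivity
  refine ⟨?_, hcpos, ?_⟩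
  · intro β v
    rw [hline β v, expquad_deriv2, hc, hCform]
    field_simp
    rw [hK₂def]
    ring_nf
  · intro 𝓑 hconv hineq
    rw [convexOn_iff_forall_pos]
    refine ⟨hconv, ?_⟩
    intro x hx z hz a b ha hb hab
    -- study g(t) = ρ (x + t • (z - x)) on [0,1]
    set v : Fin p → ℝ := z - x with hv
    set g : ℝ → ℝ := fun t => ρ (x + t • v) with hg
    have hgconv : ConvexOn ℝ (Set.Icc (0:ℝ) 1) g := by
      set A : ℝ := -(α / 2) * ((y - X *ᵥ x) ⬝ᵥ V⁻¹ *ᵥ (y - X *ᵥ x)) with hA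
      set B : ℝ := α * (d x ⬝ᵥ (X *ᵥ v)) with hB
      set C : ℝ := -(α / 2) * ((X *ᵥ v) ⬝ᵥ V⁻¹ *ᵥ (X *ᵥ v)) with hC
      have hgeq : g = fun t : ℝ =>
          L₁ * V.det ^ (-(α / 2)) - K₂ * Real.exp (A + B * t + C * t ^ 2) :=
        hline x v
      rw [hgeq]
      apply convexOn_of_deriv2_nonneg (convex_Icc 0 1)
      · refine Continuous.continuousOn ?_
        refine continuous_const.sub (continuous_const.mul ?_)
        exact Real.continuous_exp.comp
          ((continuous_const.add (continuous_const.mul continuous_id)).add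
            (continuous_const.mul (continuous_pow 2)))
      · exact fun t _ => (expquad_deriv t).differentiableAt.differentiableWithinAt
      · intro t ht
        have hd1 : deriv (fun t => L₁ * V.det ^ (-(α / 2))
              - K₂ * Real.exp (A + B * t + C * t ^ 2))
            = fun t => -(K₂ * ((B + 2 * C * t)
              * Real.exp (A + B * t + C * t ^ 2))) := by
          funext s; exact (expquad_deriv s).deriv
        rw [hd1]
        have hg' : HasDerivAt (fun u : ℝ => A + B * u + C * u ^ 2)
            (B + 2 * C * t) t := by
          have := (((hasDerivAt_id t).const_mul B).const_add A).add
            (((hasDerivAt_pow 2 t)).const_mul C)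
          simpa [Pi.add_def, mul_comm, mul_assoc, mul_left_comm] using this
        have hB' : HasDerivAt (fun u : ℝ => B + 2 * C * u) (2 * C) t := by
          simpa using ((hasDerivAt_id t).const_mul (2 * C)).const_add B
        exact (((hB'.mul hg'.exp).const_mul K₂).neg).differentiableAt.differentiableWithinAt
      · intro t ht
        rw [interior_Icc] at ht
        have h2 : iteratedDeriv 2 (fun t : ℝ => L₁ * V.det ^ (-(α / 2))
              - K₂ * Real.exp (A + B * t + C * t ^ 2)) t
            = -(K₂ * Real.exp (A + B * t + C * t ^ 2)
              * (2 * C + (B + 2 * C * t) ^ 2)) := expquad_deriv2 _ _ _ _ _ _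
        have h2' : deriv^[2] (fun t : ℝ => L₁ * V.det ^ (-(α / 2))
              - K₂ * Real.exp (A + B * t + C * t ^ 2)) t
            = -(K₂ * Real.exp (A + B * t + C * t ^ 2)
              * (2 * C + (B + 2 * C * t) ^ 2)) := by
          rw [← iteratedDeriv_eq_iterate]
          exact h2
        rw [h2']
        -- point on the segment
        have hmem : x + t • v ∈ 𝓑 := by
          have h := hconv hx hz (by linarith [ht.2] : (0:ℝ) ≤ 1 - t)
            (le_of_lt ht.1) (by ring)
          have he : x + t • v = (1 - t) • x + t • z := by rw [hv]; module
          rwa [he]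
        have hkey := hineq _ hmem v
        -- relate B + 2 C t to α * (d (x + t•v) ⬝ᵥ X *ᵥ v)
        have hBt : B + 2 * C * t = α * (d (x + t • v) ⬝ᵥ (X *ᵥ v)) := by
          rw [hB, hC, hd, hd]
          have hsub : y - X *ᵥ (x + t • v) = (y - X *ᵥ x) - t • (X *ᵥ v) := by
            rw [mulVec_add, mulVec_smul]; abel
          rw [hsub]
          simp only [mulVec_sub, mulVec_smul, sub_dotProduct, smul_dotProduct,
            smul_eq_mul]
          have hcc : (V⁻¹ *ᵥ (X *ᵥ v)) ⬝ᵥ (X *ᵥ v) = (X *ᵥ v) ⬝ᵥ V⁻¹ *ᵥ (X *ᵥ v) :=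
            dotProduct_comm _ _
          rw [hcc]; ring
        rw [hCform] at hkey
        rw [hBt]
        have hC' : 2 * C = -(α * ((X *ᵥ v) ⬝ᵥ V⁻¹ *ᵥ (X *ᵥ v))) := by rw [hC]; ring
        have hsq : (α * (d (x + t • v) ⬝ᵥ (X *ᵥ v))) ^ 2
            = α * (α * (d (x + t • v) ⬝ᵥ (X *ᵥ v)) ^ 2) := by ring
        rw [hC', hsq]
        have hexp : 0 < Real.exp (A + B * t + C * t ^ 2) := Real.exp_pos _
        have h5 : α * (α * (d (x + t • v) ⬝ᵥ (X *ᵥ v)) ^ 2)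
            ≤ α * ((X *ᵥ v) ⬝ᵥ V⁻¹ *ᵥ (X *ᵥ v)) :=
          mul_le_mul_of_nonneg_left hkey (le_of_lt hα)
        have h6 := mul_nonneg (mul_pos hK₂ hexp).le (sub_nonneg.2 h5)
        nlinarith [h6]
    -- conclude from 1-d convexity
    have h0 : g 0 = ρ x := by simp [hg]
    have h1 : g 1 = ρ z := by simp [hg, hv]
    have := hgconv.2 (Set.mem_Icc.2 ⟨le_refl 0, zero_le_one⟩)
      (Set.mem_Icc.2 ⟨zero_le_one, le_refl 1⟩) (le_of_lt ha) (le_of_lt hb) hab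
    simp only [smul_eq_mul, mul_zero, mul_one, zero_add] at this
    have hpt : a • x + b • z = x + b • v := by
      have hba : a = 1 - b := by linarith
      rw [hv, hba]; module
    rw [h0, h1] at this
    rw [hpt]
    simpa [hg, smul_eq_mul] using this
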